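/- Let M(z) = (az+b)/(cz+d) with a, c ≠ 0, ad - bc ≠ 0, and let g(z) = 1/St_M(1/z). Then g has a zero of order at least 2 at 0: g(0) = 0 and g'(0) = 0; i.e., ∞ is a superattracting fixed point of St_M. -/

import Mathlib

set_option maxHeartbeats 1600000

/-- For `M z = (az+b)/(cz+d)` with `a, c ≠ 0`, `ad - bc ≠ 0`, the point `∞`
is a superattracting fixed point of Stirling's method: the conjugation
`g z = 1/St_M(1/z)` extends analytically through `0` with `g 0 = 0` and
`g' 0 = 0`. -/
theorem stirling_mobius_general_infinity_superattracting (a b c d : ℂ)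
    (ha : a ≠ 0) (hc : c ≠ 0) (hdet : a * d - b * c ≠ 0) :
    let M : ℂ → ℂ := fun z => (a * z + b) / (c * z + d)
    let St : ℂ → ℂ := fun z => z - M z / deriv M (z - M z)
    ∃ g : ℂ → ℂ, AnalyticAt ℂ g 0 ∧
      g =ᶠ[nhdsWithin 0 {(0 : ℂ)}ᶜ] (fun z => 1 / St (1 / z)) ∧
      g 0 = 0 ∧ deriv g 0 = 0 := by
  intro M St
  -- the denominator polynomial
  set Bf : ℂ → ℂ := fun z =>
    (a * d - b * c) * z * (c + d * z) ^ 3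
      - (a + b * z) * (c ^ 2 + (2 * c * d - a * c) * z + (d ^ 2 - b * c) * z ^ 2) ^ 2
    with hBf
  have hBf0 : Bf 0 = -(a * c ^ 4) := by
    show (a * d - b * c) * 0 * (c + d * 0) ^ 3
      - (a + b * 0) * (c ^ 2 + (2 * c * d - a * c) * 0 + (d ^ 2 - b * c) * 0 ^ 2) ^ 2
      = -(a * c ^ 4)
    ring
  have hBf0ne : Bf 0 ≠ 0 := by
    rw [hBf0]
    exact neg_ne_zero.mpr (mul_ne_zero ha (pow_ne_zero 4 hc))
  -- the analytic extension
  set h : ℂ → ℂ := fun z => (a * d - b * c) * (c + d * z) ^ 3 / Bf z with hh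
  set g : ℂ → ℂ := fun z => z ^ 2 * h z with hg
  have hBfA : AnalyticAt ℂ Bf 0 := by
    apply AnalyticAt.sub
    · exact ((analyticAt_const.mul analyticAt_id).mul
        ((analyticAt_const.add (analyticAt_const.mul analyticAt_id)).pow 3))
    · exact (analyticAt_const.add (analyticAt_const.mul analyticAt_id)).mul
        (((analyticAt_const.add (analyticAt_const.mul analyticAt_id)).add
          (analyticAt_const.mul (analyticAt_id.pow 2))).pow 2)
  have hhA : AnalyticAt ℂ h 0 := by
    exact (analyticAt_const.mul
      ((analyticAt_const.add (analyticAt_const.mul analyticAt_id)).pow 3)).div hBfA hBf0ne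
  have hgA : AnalyticAt ℂ g 0 := (analyticAt_id.pow 2).mul hhA
  -- derivative of M
  have hderivM : ∀ x : ℂ, c * x + d ≠ 0 → deriv M x = (a * d - b * c) / (c * x + d) ^ 2 := by
    intro x hx
    have h1 : HasDerivAt (fun z : ℂ => a * z + b) a x := by
      simpa using ((hasDerivAt_id x).const_mul a).add_const b
    have h2 : HasDerivAt (fun z : ℂ => c * z + d) c x := by
      simpa using ((hasDerivAt_id x).const_mul c).add_const d
    have h3 := (h1.div h2 hx).deriv
    rw [show deriv M x = (a * (c * x + d) - (a * x + b) * c) / (c * x + d) ^ 2 from h3]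
    congr 1
    ring
  refine ⟨g, hgA, ?_, ?_, ?_⟩
  · -- eventual equality
    have hQev : ∀ᶠ z in nhds (0 : ℂ), c + d * z ≠ 0 := by
      have hcont : ContinuousAt (fun z : ℂ => c + d * z) 0 := by fun_prop
      have h0 : (fun z : ℂ => c + d * z) 0 ≠ 0 := by
        show c + d * 0 ≠ 0; simpa using hc
      exact hcont.eventually_ne h0
    have hRev : ∀ᶠ z in nhds (0 : ℂ),
        c ^ 2 + (2 * c * d - a * c) * z + (d ^ 2 - b * c) * z ^ 2 ≠ 0 := by
      have hcont : ContinuousAt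
          (fun z : ℂ => c ^ 2 + (2 * c * d - a * c) * z + (d ^ 2 - b * c) * z ^ 2) 0 := by
        fun_prop
      have h0 : (fun z : ℂ => c ^ 2 + (2 * c * d - a * c) * z + (d ^ 2 - b * c) * z ^ 2) 0
          ≠ 0 := by
        show c ^ 2 + (2 * c * d - a * c) * 0 + (d ^ 2 - b * c) * 0 ^ 2 ≠ 0
        simpa using pow_ne_zero 2 hc
      exact hcont.eventually_ne h0
    have hBev : ∀ᶠ z in nhds (0 : ℂ), Bf z ≠ 0 := by
      have hcont : ContinuousAt Bf 0 := hBfA.continuousAt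
      exact hcont.eventually_ne hBf0ne
    filter_upwards [((hQev.and hRev).and hBev).filter_mono nhdsWithin_le_nhds,
      self_mem_nhdsWithin] with z hpoly hz0
    obtain ⟨⟨hQz, hRz⟩, hBz⟩ := hpoly
    have hz0 : z ≠ 0 := hz0
    -- notation
    have hcd : c * (1 / z) + d = (c + d * z) / z := by field_simp
    have hcdne : c * (1 / z) + d ≠ 0 := by
      rw [hcd]; exact div_ne_zero hQz hz0
    have hM : M (1 / z) = (a + b * z) / (c + d * z) := by
      show (a * (1 / z) + b) / (c * (1 / z) + d) = (a + b * z) / (c + d * z)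
      rw [div_eq_div_iff hcdne hQz]
      field_simp
    have hcn : c * (1 / z - M (1 / z)) + d
        = (c ^ 2 + (2 * c * d - a * c) * z + (d ^ 2 - b * c) * z ^ 2)
          / (z * (c + d * z)) := by
      rw [hM]
      have hQz' : c + z * d ≠ 0 := by rw [mul_comm z d]; exact hQz
      field_simp
      ring
    have hcnne : c * (1 / z - M (1 / z)) + d ≠ 0 := by
      rw [hcn]; exact div_ne_zero hRz (mul_ne_zero hz0 hQz)
    have hdM := hderivM _ hcnne
    have hSt : St (1 / z) = Bf z / ((a * d - b * c) * z ^ 2 * (c + d * z) ^ 3) := by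
      show 1 / z - M (1 / z) / deriv M (1 / z - M (1 / z))
        = Bf z / ((a * d - b * c) * z ^ 2 * (c + d * z) ^ 3)
      rw [hdM, hcn, hM, div_pow, div_div_eq_mul_div,
        eq_div_iff (mul_ne_zero (mul_ne_zero hdet (pow_ne_zero 2 hz0)) (pow_ne_zero 3 hQz))]
      show _ = (a * d - b * c) * z * (c + d * z) ^ 3
        - (a + b * z) * (c ^ 2 + (2 * c * d - a * c) * z + (d ^ 2 - b * c) * z ^ 2) ^ 2
      field_simp
      have hQz' : c + z * d ≠ 0 := by rw [mul_comm z d]; exact hQz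
      rw [mul_sub, mul_div_assoc', mul_div_cancel_left₀ _ (pow_ne_zero 3 hQz')]
      ring
    show g z = 1 / St (1 / z)
    rw [hSt, one_div_div]
    show z ^ 2 * ((a * d - b * c) * (c + d * z) ^ 3 / Bf z)
      = (a * d - b * c) * z ^ 2 * (c + d * z) ^ 3 / Bf z
    ring
  · show (0 : ℂ) ^ 2 * h 0 = 0
    ring
  · have hd : HasDerivAt g ((2 : ℂ) * 0 ^ (2 - 1) * h 0 + 0 ^ 2 * deriv h 0) 0 :=
      (hasDerivAt_pow 2 (0 : ℂ)).mul (hhA.differentiableAt.hasDerivAt)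
    rw [hd.deriv]
    ring
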